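/- (Karlin's theorem) Let S be an N×N irreducible column-stochastic matrix with nonnegative entries (Sᵀ·1 = 1) and let D be a diagonal matrix with positive diagonal entries. Then the map τ ∈ [0,1] ↦ λ_PF(((1−τ)I + τS)D) is nonincreasing, where λ_PF denotes the Perron–Frobenius eigenvalue (spectral radius). -/

import Mathlib

open Matrix

/-- `μ` is a (complex) eigenvalue of the real matrix `A`. -/
def IsEigenvalue {N : ℕ} (A : Matrix (Fin N) (Fin N) ℝ) (μ : ℂ) : Prop :=
  ∃ v : Fin N → ℂ, v ≠ 0 ∧ (A.map Complex.ofReal).mulVec v = μ • v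

/-- `A` has no nontrivial invariant coordinate subspace spanned by standard basis vectors. -/
def MatIrreducible {N : ℕ} (A : Matrix (Fin N) (Fin N) ℝ) : Prop :=
  ∀ S : Finset (Fin N), S.Nonempty → S ≠ Finset.univ → ∃ i ∈ S, ∃ j ∉ S, A j i ≠ 0

/-- The spectral radius of a real matrix. -/
noncomputable def specRad {N : ℕ} (A : Matrix (Fin N) (Fin N) ℝ) : ℝ :=
  sSup {r : ℝ | ∃ μ : ℂ, IsEigenvalue A μ ∧ r = ‖μ‖}

namespace Karlin

variable {N : ℕ}

/-- L5: a real eigenpair gives a complex eigenvalue. -/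
lemma isEigenvalue_of_real {A : Matrix (Fin N) (Fin N) ℝ} {u : Fin N → ℝ} {r : ℝ}
    (hu : u ≠ 0) (h : A.mulVec u = r • u) : IsEigenvalue A (r : ℂ) := by
  refine ⟨fun i => (u i : ℂ), ?_, ?_⟩
  · intro hv
    apply hu
    funext i
    have := congrFun hv i
    simpa using this
  · funext i
    have := congrFun h i
    simp only [mulVec, dotProduct, Matrix.map_apply, Pi.smul_apply, smul_eq_mul] at this ⊢
    exact_mod_cast this

/-- L4: eigenvalues of the transpose agree. -/
lemma isEigenvalue_transpose_iff {A : Matrix (Fin N) (Fin N) ℝ} {μ : ℂ} :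
    IsEigenvalue Aᵀ μ ↔ IsEigenvalue A μ := by
  have key : ∀ B : Matrix (Fin N) (Fin N) ℝ, ∀ μ : ℂ,
      (IsEigenvalue B μ ↔ (μ • (1 : Matrix (Fin N) (Fin N) ℂ) - B.map Complex.ofReal).det = 0) := by
    intro B μ
    rw [← Matrix.exists_mulVec_eq_zero_iff]
    unfold IsEigenvalue
    apply exists_congr
    intro v
    constructor
    · rintro ⟨hv, h⟩
      refine ⟨hv, ?_⟩
      rw [Matrix.sub_mulVec, Matrix.smul_mulVec, Matrix.one_mulVec, h, sub_self]
    · rintro ⟨hv, h⟩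
      refine ⟨hv, ?_⟩
      rw [Matrix.sub_mulVec, Matrix.smul_mulVec, Matrix.one_mulVec, sub_eq_zero] at h
      exact h.symm
  rw [key, key]
  have : (μ • (1 : Matrix (Fin N) (Fin N) ℂ) - Aᵀ.map Complex.ofReal)
      = (μ • (1 : Matrix (Fin N) (Fin N) ℂ) - A.map Complex.ofReal)ᵀ := by
    rw [Matrix.transpose_sub, Matrix.transpose_smul, Matrix.transpose_one, Matrix.transpose_map]
  rw [this, Matrix.det_transpose]

/-- L3: Collatz–Wielandt upper bound on any eigenvalue. -/
lemma abs_eigenvalue_le {A : Matrix (Fin N) (Fin N) ℝ} {x : Fin N → ℝ} {c : ℝ}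
    (hA : ∀ i j, 0 ≤ A i j) (hx : ∀ i, 0 < x i)
    (hAx : ∀ i, A.mulVec x i ≤ c * x i) {μ : ℂ} (hμ : IsEigenvalue A μ) :
    ‖μ‖ ≤ c := by
  obtain ⟨v, hv, hev⟩ := hμ
  obtain ⟨j₀, hj₀⟩ : ∃ j, v j ≠ 0 := by
    by_contra h
    push_neg at h
    exact hv (funext h)
  -- maximize abs (v i) / x i
  have hne : (Finset.univ : Finset (Fin N)).Nonempty := ⟨j₀, Finset.mem_univ _⟩
  obtain ⟨i₀, -, hi₀⟩ := Finset.exists_max_image Finset.univ (fun i => ‖v i‖ / x i) hne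
  set t := ‖v i₀‖ / x i₀ with ht
  have htpos : 0 < t := by
    have h1 : ‖v j₀‖ / x j₀ ≤ t := hi₀ j₀ (Finset.mem_univ _)
    have : 0 < ‖v j₀‖ / x j₀ :=
      div_pos (by simpa using hj₀) (hx j₀)
    linarith
  have hbound : ∀ j, ‖v j‖ ≤ t * x j := by
    intro j
    have := hi₀ j (Finset.mem_univ _)
    rw [div_le_iff₀ (hx j)] at this
    linarith [this]
  have h1 : ‖μ‖ * ‖v i₀‖ ≤ t * (c * x i₀) := by
    have h2 : ‖μ * v i₀‖ = ‖(A.map Complex.ofReal).mulVec v i₀‖ := by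
      rw [hev]; simp
    calc ‖μ‖ * ‖v i₀‖ = ‖μ * v i₀‖ := (norm_mul _ _).symm
      _ = ‖∑ j, (A i₀ j : ℂ) * v j‖ := by
          rw [h2]; rfl
      _ ≤ ∑ j, ‖(A i₀ j : ℂ) * v j‖ := norm_sum_le _ _
      _ = ∑ j, A i₀ j * ‖v j‖ := by
          apply Finset.sum_congr rfl
          intro j _
          rw [norm_mul, Complex.norm_real, Real.norm_eq_abs, abs_of_nonneg (hA i₀ j)]
      _ ≤ ∑ j, A i₀ j * (t * x j) := by
          apply Finset.sum_le_sum
          intro j _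
          exact mul_le_mul_of_nonneg_left (hbound j) (hA i₀ j)
      _ = t * (A.mulVec x i₀) := by
          simp only [mulVec, dotProduct, Finset.mul_sum]
          apply Finset.sum_congr rfl
          intro j _
          ring
      _ ≤ t * (c * x i₀) := mul_le_mul_of_nonneg_left (hAx i₀) (le_of_lt htpos)
  have habs : ‖v i₀‖ = t * x i₀ := by
    rw [ht, div_mul_cancel₀]
    exact ne_of_gt (hx i₀)
  rw [habs] at h1
  have hpx : 0 < t * x i₀ := mul_pos htpos (hx i₀)
  have h1' : ‖μ‖ * (t * x i₀) ≤ c * (t * x i₀) := by linarith [h1]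
  exact le_of_mul_le_mul_right h1' hpx


/-- L6: specRad from a positive eigenpair. -/
lemma specRad_eq_of_eigenpair {A : Matrix (Fin N) (Fin N) ℝ} {u : Fin N → ℝ} {r : ℝ}
    (hN : 0 < N) (hA : ∀ i j, 0 ≤ A i j) (hu : ∀ i, 0 < u i) (hr : 0 ≤ r)
    (h : A.mulVec u = r • u) : specRad A = r := by
  have hune : u ≠ 0 := by
    intro h0
    have := hu ⟨0, hN⟩
    rw [h0] at this
    simp at this
  have hmem : r ∈ {r : ℝ | ∃ μ : ℂ, IsEigenvalue A μ ∧ r = ‖μ‖} :=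
    ⟨(r : ℂ), isEigenvalue_of_real hune h, by simp [abs_of_nonneg hr]⟩
  have hub : ∀ s ∈ {r : ℝ | ∃ μ : ℂ, IsEigenvalue A μ ∧ r = ‖μ‖}, s ≤ r := by
    rintro s ⟨μ, hμ, rfl⟩
    exact abs_eigenvalue_le hA hu (fun i => by rw [h]; simp) hμ
  exact le_antisymm (csSup_le ⟨r, hmem⟩ hub) (le_csSup ⟨r, hub⟩ hmem)

/-- L7: specRad upper bound from an eigenvalue bound. -/
lemma specRad_le {A : Matrix (Fin N) (Fin N) ℝ} {c : ℝ} (hc : 0 ≤ c)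
    (h : ∀ μ : ℂ, IsEigenvalue A μ → ‖μ‖ ≤ c) : specRad A ≤ c := by
  rcases Set.eq_empty_or_nonempty {r : ℝ | ∃ μ : ℂ, IsEigenvalue A μ ∧ r = ‖μ‖} with he | hne
  · rw [specRad, he, Real.sSup_empty]; exact hc
  · exact csSup_le hne (by rintro s ⟨μ, hμ, rfl⟩; exact h μ hμ)


section PowPos

variable {A : Matrix (Fin N) (Fin N) ℝ}

lemma pow_entry_nonneg (hA : ∀ i j, 0 ≤ A i j) (k : ℕ) :
    ∀ i j, 0 ≤ (A ^ k) i j := by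
  induction k with
  | zero => intro i j; simp [Matrix.one_apply]; split <;> norm_num
  | succ k ih =>
    intro i j
    rw [pow_succ, Matrix.mul_apply]
    exact Finset.sum_nonneg fun m _ => mul_nonneg (ih i m) (hA m j)

lemma onePlus_nonneg (hA : ∀ i j, 0 ≤ A i j) : ∀ i j, 0 ≤ (1 + A) i j := by
  intro i j
  rcases eq_or_ne i j with rfl | hij
  · simp [Matrix.add_apply, Matrix.one_apply_eq]; linarith [hA i i]
  · simp [Matrix.add_apply, Matrix.one_apply_ne hij]; exact hA i j

lemma onePlus_pow_single_le (hA : ∀ i j, 0 ≤ A i j) (k : ℕ) (m i j : Fin N) :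
    (1 + A) j m * ((1 + A) ^ k) m i ≤ ((1 + A) ^ (k + 1)) j i := by
  rw [pow_succ', Matrix.mul_apply]
  apply Finset.single_le_sum (f := fun m => (1 + A) j m * ((1 + A) ^ k) m i)
    (fun m _ => mul_nonneg (onePlus_nonneg hA j m) (pow_entry_nonneg (onePlus_nonneg hA) k m i))
    (Finset.mem_univ m)

lemma onePlus_diag_one_le (hA : ∀ i j, 0 ≤ A i j) (i : Fin N) : 1 ≤ (1 + A) i i := by
  simp [Matrix.add_apply, Matrix.one_apply_eq]; linarith [hA i i]

lemma onePlus_pow_mono (hA : ∀ i j, 0 ≤ A i j) (k : ℕ) (i j : Fin N) :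
    ((1 + A) ^ k) j i ≤ ((1 + A) ^ (k + 1)) j i := by
  calc ((1 + A) ^ k) j i = 1 * ((1 + A) ^ k) j i := (one_mul _).symm
    _ ≤ (1 + A) j j * ((1 + A) ^ k) j i :=
        mul_le_mul_of_nonneg_right (onePlus_diag_one_le hA j)
          (pow_entry_nonneg (onePlus_nonneg hA) k j i)
    _ ≤ ((1 + A) ^ (k + 1)) j i := onePlus_pow_single_le hA k j i j

lemma onePlus_pow_diag_pos (hA : ∀ i j, 0 ≤ A i j) (k : ℕ) (i : Fin N) :
    0 < ((1 + A) ^ k) i i := by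
  induction k with
  | zero => simp
  | succ k ih =>
    calc (0:ℝ) < (1 + A) i i * ((1 + A) ^ k) i i :=
          mul_pos (lt_of_lt_of_le one_pos (onePlus_diag_one_le hA i)) ih
      _ ≤ _ := onePlus_pow_single_le hA k i i i

lemma onePlus_pow_pos (hA : ∀ i j, 0 ≤ A i j) (hirr : MatIrreducible A) (i j : Fin N) :
    0 < ((1 + A) ^ (N - 1)) j i := by
  classical
  set F : ℕ → Finset (Fin N) := fun k => Finset.univ.filter (fun j => 0 < ((1 + A) ^ k) j i) with hF
  have hiF : ∀ k, i ∈ F k := fun k =>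
    Finset.mem_filter.mpr ⟨Finset.mem_univ _, onePlus_pow_diag_pos hA k i⟩
  have hmono : ∀ k, F k ⊆ F (k + 1) := by
    intro k j hj
    rw [hF, Finset.mem_filter] at hj ⊢
    exact ⟨Finset.mem_univ _, lt_of_lt_of_le hj.2 (onePlus_pow_mono hA k i j)⟩
  have hcard : ∀ k, min (k + 1) N ≤ (F k).card := by
    intro k
    induction k with
    | zero =>
      have : 0 < (F 0).card := Finset.card_pos.mpr ⟨i, hiF 0⟩
      omega
    | succ k ih =>
      rcases eq_or_ne (F k) Finset.univ with hu | hu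
      · have : F (k+1) = Finset.univ := Finset.eq_univ_of_forall
          (fun j => hmono k (hu ▸ Finset.mem_univ j))
        rw [this, Finset.card_univ, Fintype.card_fin]
        omega
      · obtain ⟨a, ha, b, hb, hab⟩ := hirr (F k) ⟨i, hiF k⟩ hu
        have haF : 0 < ((1 + A) ^ k) a i := (Finset.mem_filter.mp ha).2
        have hPba : 0 < (1 + A) b a := by
          have hba : b ≠ a := fun h => hb (h ▸ ha)
          have : (1 + A) b a = A b a := by
            simp [Matrix.add_apply, Matrix.one_apply_ne hba]
          rw [this]
          exact lt_of_le_of_ne (hA b a) (Ne.symm hab)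
        have hbF : b ∈ F (k + 1) := by
          rw [hF, Finset.mem_filter]
          refine ⟨Finset.mem_univ _, lt_of_lt_of_le (mul_pos hPba haF) ?_⟩
          exact onePlus_pow_single_le hA k a i b
        have hsub : insert b (F k) ⊆ F (k + 1) := by
          intro x hx
          rcases Finset.mem_insert.mp hx with rfl | hx
          · exact hbF
          · exact hmono k hx
        have h1 : (F k).card + 1 ≤ (F (k+1)).card := by
          have := Finset.card_le_card hsub
          rwa [Finset.card_insert_of_notMem hb] at this
        have h2 : (F k).card ≤ N - 1 := by
          have hlt : (F k).card < N := by
            have hle : (F k).card ≤ N := by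
              simpa using Finset.card_le_card (Finset.subset_univ (F k))
            rcases lt_or_eq_of_le hle with h | h
            · exact h
            · exfalso; apply hu; apply Finset.eq_univ_of_card; simpa using h
          omega
        omega
  have : F (N - 1) = Finset.univ := by
    apply Finset.eq_univ_of_card
    have := hcard (N - 1)
    have hle : (F (N-1)).card ≤ N := by
      simpa using Finset.card_le_card (Finset.subset_univ (F (N-1)))
    have hN : 0 < N := Fin.pos i
    rw [Fintype.card_fin]
    omega
  have hj : j ∈ F (N - 1) := by rw [this]; exact Finset.mem_univ j
  exact (Finset.mem_filter.mp hj).2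

end PowPos


section Perron

variable {A : Matrix (Fin N) (Fin N) ℝ}

lemma continuous_mulVec (M : Matrix (Fin N) (Fin N) ℝ) :
    Continuous (fun y : Fin N → ℝ => M.mulVec y) := by
  apply continuous_pi
  intro i
  simp only [Matrix.mulVec, dotProduct]
  exact continuous_finset_sum _ (fun j _ => (continuous_const.mul (continuous_apply j)))

lemma continuousOn_inf' {α : Type*} [TopologicalSpace α] (s : Finset (Fin N))
    (hs : s.Nonempty) (f : Fin N → α → ℝ) (t : Set α)
    (h : ∀ i ∈ s, ContinuousOn (f i) t) :
    ContinuousOn (fun x => s.inf' hs (fun i => f i x)) t := by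
  induction s using Finset.cons_induction with
  | empty => exact absurd hs (by simp)
  | cons a s ha ih =>
    rcases s.eq_empty_or_nonempty with rfl | hs'
    · simpa using h a (by simp)
    · have heq : (fun x => (Finset.cons a s ha).inf' hs (fun i => f i x))
           = fun x => (f a x) ⊓ (s.inf' hs' (fun i => f i x)) := by
        funext x
        exact Finset.inf'_cons (H := hs') (f := fun i => f i x)
      rw [heq]
      exact ContinuousOn.inf (h a (by simp))
        (ih hs' (fun i hi => h i (Finset.mem_cons_of_mem hi)))

lemma mulVec_apply' (M : Matrix (Fin N) (Fin N) ℝ) (v : Fin N → ℝ) (i : Fin N) :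
    M.mulVec v i = ∑ j, M i j * v j := rfl

/-- Perron-Frobenius: existence of a positive eigenvector for a nonnegative
irreducible matrix. -/
theorem perron_exists (hN : 0 < N) (hA : ∀ i j, 0 ≤ A i j) (hirr : MatIrreducible A) :
    ∃ (r : ℝ) (u : Fin N → ℝ), 0 ≤ r ∧ (∀ i, 0 < u i) ∧ A.mulVec u = r • u := by
  classical
  haveI : Nonempty (Fin N) := ⟨⟨0, hN⟩⟩
  have hne : (Finset.univ : Finset (Fin N)).Nonempty := Finset.univ_nonempty
  set P := (1 + A) ^ (N - 1) with hPdef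
  have hP : ∀ i j, 0 < P i j := fun i j => onePlus_pow_pos hA hirr j i
  set Δ := stdSimplex ℝ (Fin N) with hΔdef
  -- positivity of P * y for y in the simplex
  have hPy : ∀ y ∈ Δ, ∀ i, 0 < P.mulVec y i := by
    intro y hy i
    obtain ⟨hy0, hy1⟩ := hy
    obtain ⟨j₀, hj₀⟩ : ∃ j, 0 < y j := by
      by_contra hc
      push_neg at hc
      have : ∑ j, y j = 0 := le_antisymm (Finset.sum_nonpos (fun j _ => hc j))
        (Finset.sum_nonneg (fun j _ => hy0 j))
      rw [hy1] at this; norm_num at this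
    rw [mulVec_apply']
    apply Finset.sum_pos' (fun j _ => mul_nonneg (hP i j).le (hy0 j))
    exact ⟨j₀, Finset.mem_univ _, mul_pos (hP i j₀) hj₀⟩
  have hsumpos : ∀ y ∈ Δ, 0 < ∑ i, P.mulVec y i :=
    fun y hy => Finset.sum_pos (fun i _ => hPy y hy i) hne
  set Φ : (Fin N → ℝ) → (Fin N → ℝ) := fun y => (∑ i, P.mulVec y i)⁻¹ • P.mulVec y with hΦdef
  have hΦcont : ContinuousOn Φ Δ := by
    rw [hΦdef]
    refine ContinuousOn.smul (f := fun y => (∑ i, P.mulVec y i)⁻¹) (g := fun y => P.mulVec y) ?_ ?_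
    · exact ContinuousOn.inv₀ ((continuous_finset_sum _ (fun i _ =>
        (continuous_apply i).comp (continuous_mulVec P))).continuousOn)
        (fun y hy => ne_of_gt (hsumpos y hy))
    · exact (continuous_mulVec P).continuousOn
  set K := Φ '' Δ with hKdef
  have hKcompact : IsCompact K := (isCompact_stdSimplex ℝ (Fin N)).image_of_continuousOn hΦcont
  have hKpos : ∀ x ∈ K, ∀ i, 0 < x i := by
    rintro x ⟨y, hy, rfl⟩ i
    exact mul_pos (inv_pos.mpr (hsumpos y hy)) (hPy y hy i)
  have hKΔ : K ⊆ Δ := by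
    rintro x ⟨y, hy, rfl⟩
    constructor
    · intro i
      exact (mul_pos (inv_pos.mpr (hsumpos y hy)) (hPy y hy i)).le
    · simp only [hΦdef, Pi.smul_apply, smul_eq_mul, ← Finset.mul_sum]
      exact inv_mul_cancel₀ (ne_of_gt (hsumpos y hy))
  have hKne : K.Nonempty := by
    refine ⟨Φ (fun _ => (N : ℝ)⁻¹), ⟨_, ⟨fun i => by positivity, ?_⟩, rfl⟩⟩
    rw [Finset.sum_const, Finset.card_univ, Fintype.card_fin, nsmul_eq_mul]
    rw [mul_inv_cancel₀ (by positivity)]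
  set g : (Fin N → ℝ) → ℝ := fun x => Finset.univ.inf' hne (fun i => A.mulVec x i / x i) with hgdef
  have hgcont : ContinuousOn g K := by
    apply continuousOn_inf'
    intro i _
    apply ContinuousOn.div
    · exact ((continuous_apply i).comp (continuous_mulVec A)).continuousOn
    · exact (continuous_apply i).continuousOn
    · intro x hx; exact ne_of_gt (hKpos x hx i)
  obtain ⟨u, huK, humax⟩ := hKcompact.exists_isMaxOn hKne hgcont
  set r := g u with hrdef
  have hu : ∀ i, 0 < u i := hKpos u huK
  have hru : ∀ i, r * u i ≤ A.mulVec u i := by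
    intro i
    have : r ≤ A.mulVec u i / u i := Finset.inf'_le _ (Finset.mem_univ i)
    calc r * u i ≤ (A.mulVec u i / u i) * u i :=
          mul_le_mul_of_nonneg_right this (hu i).le
      _ = A.mulVec u i := div_mul_cancel₀ _ (ne_of_gt (hu i))
  have hr0 : 0 ≤ r := by
    apply Finset.le_inf'
    intro i _
    apply div_nonneg _ (hu i).le
    rw [mulVec_apply']
    exact Finset.sum_nonneg (fun j _ => mul_nonneg (hA i j) (hu j).le)
  refine ⟨r, u, hr0, hu, ?_⟩
  by_contra hneq
  -- the slack vector
  set w : Fin N → ℝ := A.mulVec u - r • u with hwdef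
  have hw0 : ∀ i, 0 ≤ w i := fun i => by
    simp only [hwdef, Pi.sub_apply, Pi.smul_apply, smul_eq_mul, sub_nonneg]
    exact hru i
  have hwne : ∃ j, 0 < w j := by
    by_contra hc
    push_neg at hc
    apply hneq
    funext i
    have := le_antisymm (hc i) (hw0 i)
    simp only [hwdef, Pi.sub_apply, Pi.smul_apply, smul_eq_mul] at this
    have : A.mulVec u i = r * u i := by linarith [this]
    simpa using this
  obtain ⟨j₀, hj₀⟩ := hwne
  have hPw : ∀ i, 0 < P.mulVec w i := by
    intro i
    rw [mulVec_apply']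
    apply Finset.sum_pos' (fun j _ => mul_nonneg (hP i j).le (hw0 j))
    exact ⟨j₀, Finset.mem_univ _, mul_pos (hP i j₀) hj₀⟩
  -- P commutes with A
  have hcomm : A * P = P * A := by
    have h1 : Commute A (1 + A) := (Commute.one_right A).add_right (Commute.refl A)
    exact (h1.pow_right (N - 1))
  set z := P.mulVec u with hzdef
  have hz : ∀ i, 0 < z i := by
    intro i
    show 0 < P.mulVec u i
    rw [mulVec_apply']
    apply Finset.sum_pos' (fun j _ => mul_nonneg (hP i j).le (hu j).le)
    exact ⟨j₀, Finset.mem_univ _, mul_pos (hP i j₀) (hu j₀)⟩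
  have hAz : ∀ i, r * z i < A.mulVec z i := by
    intro i
    have key : A.mulVec z - r • z = P.mulVec w := by
      rw [hzdef, hwdef, Matrix.mulVec_mulVec, hcomm, ← Matrix.mulVec_mulVec,
        Matrix.mulVec_sub]
      congr 1
      rw [Matrix.mulVec_smul]
    have := congrFun key i
    simp only [Pi.sub_apply, Pi.smul_apply, smul_eq_mul] at this
    have h2 := hPw i
    linarith [this, h2]
  -- normalized z lies in K and has strictly bigger g-value
  have huΔ : u ∈ Δ := hKΔ huK
  set z' := Φ u with hz'def
  have hz'K : z' ∈ K := ⟨u, huΔ, rfl⟩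
  have hz'z : z' = (∑ i, z i)⁻¹ • z := rfl
  have hc : 0 < (∑ i, z i)⁻¹ := inv_pos.mpr (Finset.sum_pos (fun i _ => hz i) hne)
  have hgz' : r < g z' := by
    rw [hgdef]
    rw [Finset.lt_inf'_iff]
    intro i _
    have hnum : A.mulVec z' i = (∑ i, z i)⁻¹ * A.mulVec z i := by
      rw [hz'z, Matrix.mulVec_smul]
      simp
    have hden : z' i = (∑ i, z i)⁻¹ * z i := by rw [hz'z]; simp
    rw [hnum, hden, mul_div_mul_left _ _ (ne_of_gt hc)]
    exact (lt_div_iff₀ (hz i)).mpr (hAz i)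
  exact absurd (humax hz'K) (not_le.mpr (hrdef ▸ hgz'))

end Perron


section Jensen

/-- Donsker–Varadhan / Collatz–Wielandt log lower bound using both Perron vectors. -/
lemma collatz_log_lower {B : Matrix (Fin N) (Fin N) ℝ} {u w x : Fin N → ℝ} {lam : ℝ}
    (hB : ∀ i j, 0 ≤ B i j) (hu : ∀ i, 0 < u i) (hw : ∀ i, 0 < w i) (hx : ∀ i, 0 < x i)
    (hlam : 0 < lam) (hBu : B.mulVec u = lam • u) (hBw : Bᵀ.mulVec w = lam • w) :
    (∑ i, w i * u i) * Real.log lam ≤ ∑ i, w i * u i * Real.log (B.mulVec x i / x i) := by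
  classical
  have hBu' : ∀ i, ∑ j, B i j * u j = lam * u i := by
    intro i
    have := congrFun hBu i
    simpa [mulVec_apply'] using this
  have hBw' : ∀ j, ∑ i, B i j * w i = lam * w j := by
    intro j
    have := congrFun hBw j
    simp only [mulVec_apply', Pi.smul_apply, smul_eq_mul, Matrix.transpose_apply] at this
    exact this
  -- positivity of B *ᵥ x
  have hs : ∀ i, 0 < B.mulVec x i := by
    intro i
    obtain ⟨j₁, -, hj₁⟩ : ∃ j ∈ Finset.univ, 0 < B i j * u j := by
      apply Finset.exists_lt_of_sum_lt (f := fun _ => (0:ℝ))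
      rw [Finset.sum_const, hBu']
      simp [mul_pos hlam (hu i)]
    have hBij : 0 < B i j₁ := by
      by_contra hc
      push_neg at hc
      nlinarith [hu j₁, hj₁]
    rw [mulVec_apply']
    apply Finset.sum_pos' (fun j _ => mul_nonneg (hB i j) (hx j).le)
    exact ⟨j₁, Finset.mem_univ _, mul_pos hBij (hx j₁)⟩
  -- the per-row Jensen inequality
  have hJ : ∀ i, ∑ j, (B i j * u j / (lam * u i)) * Real.log (x j / u j)
      ≤ Real.log (B.mulVec x i / (lam * u i)) := by
    intro i
    set ν : Fin N → ℝ := fun j => B i j * u j / (lam * u i) with hν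
    have hν0 : ∀ j, 0 ≤ ν j := fun j =>
      div_nonneg (mul_nonneg (hB i j) (hu j).le) (mul_pos hlam (hu i)).le
    have hν1 : ∑ j, ν j = 1 := by
      rw [hν, ← Finset.sum_div, hBu', div_self (ne_of_gt (mul_pos hlam (hu i)))]
    have ht : ∀ j, 0 < x j / u j := fun j => div_pos (hx j) (hu j)
    have hgm := Real.geom_mean_le_arith_mean_weighted Finset.univ ν (fun j => x j / u j)
      (fun j _ => hν0 j) hν1 (fun j _ => (ht j).le)
    have hprodpos : ∀ j ∈ (Finset.univ : Finset (Fin N)), (x j / u j) ^ (ν j) ≠ 0 :=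
      fun j _ => ne_of_gt (Real.rpow_pos_of_pos (ht j) _)
    have hlog := Real.log_le_log (Finset.prod_pos (fun j _ => Real.rpow_pos_of_pos (ht j) _)) hgm
    rw [Real.log_prod hprodpos] at hlog
    have hsum_eq : ∑ j, ν j * (x j / u j) = B.mulVec x i / (lam * u i) := by
      rw [mulVec_apply', Finset.sum_div]
      apply Finset.sum_congr rfl
      intro j _
      rw [hν]
      rw [div_mul_div_comm, div_eq_div_iff
        (ne_of_gt (mul_pos (mul_pos hlam (hu i)) (hu j))) (ne_of_gt (mul_pos hlam (hu i)))]
      ring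
    calc ∑ j, ν j * Real.log (x j / u j)
        = ∑ j, Real.log ((x j / u j) ^ (ν j)) := by
          apply Finset.sum_congr rfl
          intro j _
          rw [Real.log_rpow (ht j)]
      _ ≤ Real.log (∑ j, ν j * (x j / u j)) := hlog
      _ = Real.log (B.mulVec x i / (lam * u i)) := by rw [hsum_eq]
  -- multiply by w i * u i and sum
  have hmain : ∑ i, w i * u i * (∑ j, (B i j * u j / (lam * u i)) * Real.log (x j / u j))
      ≤ ∑ i, w i * u i * Real.log (B.mulVec x i / (lam * u i)) := by
    apply Finset.sum_le_sum
    intro i _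
    exact mul_le_mul_of_nonneg_left (hJ i) (mul_pos (hw i) (hu i)).le
  -- compute the double sum
  have hdouble : ∑ i, w i * u i * (∑ j, (B i j * u j / (lam * u i)) * Real.log (x j / u j))
      = ∑ j, w j * u j * Real.log (x j / u j) := by
    have : ∀ i, w i * u i * (∑ j, (B i j * u j / (lam * u i)) * Real.log (x j / u j))
        = ∑ j, (B i j * w i) * (u j * Real.log (x j / u j)) / lam := by
      intro i
      rw [Finset.mul_sum]
      apply Finset.sum_congr rfl
      intro j _
      field_simp [ne_of_gt hlam, ne_of_gt (hu i)]
    rw [Finset.sum_congr rfl (fun i _ => this i), Finset.sum_comm]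
    apply Finset.sum_congr rfl
    intro j _
    rw [← Finset.sum_div, ← Finset.sum_mul, hBw']
    field_simp
  rw [hdouble] at hmain
  -- unfold the logs
  have hexpand : ∀ i, Real.log (B.mulVec x i / (lam * u i))
      = Real.log (B.mulVec x i / x i) - Real.log lam + (Real.log (x i) - Real.log (u i)) := by
    intro i
    rw [Real.log_div (ne_of_gt (hs i)) (ne_of_gt (mul_pos hlam (hu i))),
      Real.log_div (ne_of_gt (hs i)) (ne_of_gt (hx i)),
      Real.log_mul (ne_of_gt hlam) (ne_of_gt (hu i))]
    ring
  have hexpand2 : ∀ j, Real.log (x j / u j) = Real.log (x j) - Real.log (u j) :=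
    fun j => Real.log_div (ne_of_gt (hx j)) (ne_of_gt (hu j))
  have hsum1 : ∑ i, w i * u i * Real.log (x i / u i)
      = ∑ i, w i * u i * (Real.log (x i) - Real.log (u i)) :=
    Finset.sum_congr rfl (fun j _ => by rw [hexpand2 j])
  have hsum2 : ∑ i, w i * u i * Real.log (B.mulVec x i / (lam * u i))
      = ∑ i, w i * u i * Real.log (B.mulVec x i / x i)
        - (∑ i, w i * u i) * Real.log lam
        + ∑ i, w i * u i * (Real.log (x i) - Real.log (u i)) := by
    calc ∑ i, w i * u i * Real.log (B.mulVec x i / (lam * u i))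
        = ∑ i, (w i * u i * Real.log (B.mulVec x i / x i)
            - w i * u i * Real.log lam
            + w i * u i * (Real.log (x i) - Real.log (u i))) :=
          Finset.sum_congr rfl (fun i _ => by rw [hexpand i]; ring)
      _ = _ := by
          rw [Finset.sum_add_distrib, Finset.sum_sub_distrib, ← Finset.sum_mul]
  rw [hsum1] at hmain
  rw [hsum2] at hmain
  linarith [hmain]
  
end Jensen


section Main

lemma irred_transpose {A : Matrix (Fin N) (Fin N) ℝ} (h : MatIrreducible A) :
    MatIrreducible Aᵀ := by
  intro F hFne hFuniv
  classical
  have hc1 : (Finset.univ \ F).Nonempty := by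
    rw [Finset.sdiff_nonempty]
    intro hsub
    exact hFuniv (Finset.eq_univ_of_forall (fun x => hsub (Finset.mem_univ x)))
  have hc2 : Finset.univ \ F ≠ Finset.univ := by
    intro hEq
    obtain ⟨a, ha⟩ := hFne
    have : a ∈ Finset.univ \ F := by rw [hEq]; exact Finset.mem_univ a
    exact (Finset.mem_sdiff.mp this).2 ha
  obtain ⟨i, hi, j, hj, hij⟩ := h (Finset.univ \ F) hc1 hc2
  have hiF : i ∉ F := (Finset.mem_sdiff.mp hi).2
  have hjF : j ∈ F := by
    by_contra hc
    exact hj (Finset.mem_sdiff.mpr ⟨Finset.mem_univ _, hc⟩)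
  exact ⟨j, hjF, i, hiF, hij⟩

lemma matIrreducible_mono {A B : Matrix (Fin N) (Fin N) ℝ} (h : MatIrreducible A)
    (himp : ∀ i j, A j i ≠ 0 → B j i ≠ 0) : MatIrreducible B := by
  intro F h1 h2
  obtain ⟨i, hi, j, hj, hij⟩ := h F h1 h2
  exact ⟨i, hi, j, hj, himp i j hij⟩

end Main


section Core

lemma root_pos_of_colsum {C : Matrix (Fin N) (Fin N) ℝ} {c : Fin N → ℝ} {r : ℝ}
    {u : Fin N → ℝ} (hN : 0 < N) (hcol : ∀ j, ∑ i, C i j = c j) (hc : ∀ j, 0 < c j)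
    (hu : ∀ i, 0 < u i) (hCu : C.mulVec u = r • u) : 0 < r := by
  haveI : Nonempty (Fin N) := ⟨⟨0, hN⟩⟩
  have h1 : ∑ i, C.mulVec u i = ∑ j, c j * u j := by
    simp only [mulVec_apply']
    rw [Finset.sum_comm]
    apply Finset.sum_congr rfl
    intro j _
    rw [← Finset.sum_mul, hcol]
  have h2 : ∑ i, C.mulVec u i = r * ∑ i, u i := by
    rw [hCu]
    simp only [Pi.smul_apply, smul_eq_mul, ← Finset.mul_sum]
  have h3 : 0 < ∑ j, c j * u j :=
    Finset.sum_pos (fun j _ => mul_pos (hc j) (hu j)) Finset.univ_nonempty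
  have h4 : 0 < ∑ i, u i := Finset.sum_pos (fun i _ => hu i) Finset.univ_nonempty
  nlinarith [h1, h2, h3, h4]

lemma mulVec_pos_of_eigen {B : Matrix (Fin N) (Fin N) ℝ} {u u' : Fin N → ℝ} {r : ℝ}
    (hB : ∀ i j, 0 ≤ B i j) (hu : ∀ i, 0 < u i) (hr : 0 < r)
    (hBu : B.mulVec u = r • u) (hu' : ∀ i, 0 < u' i) : ∀ i, 0 < B.mulVec u' i := by
  intro i
  have hBu' : ∑ j, B i j * u j = r * u i := by
    have := congrFun hBu i
    simpa [mulVec_apply'] using this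
  obtain ⟨j₁, -, hj₁⟩ : ∃ j ∈ Finset.univ, 0 < B i j * u j := by
    apply Finset.exists_lt_of_sum_lt (f := fun _ => (0:ℝ))
    rw [Finset.sum_const, hBu']
    simp [mul_pos hr (hu i)]
  have hBij : 0 < B i j₁ := by
    by_contra hc
    push_neg at hc
    nlinarith [hu j₁, hj₁]
  rw [mulVec_apply']
  apply Finset.sum_pos' (fun j _ => mul_nonneg (hB i j) (hu' j).le)
  exact ⟨j₁, Finset.mem_univ _, mul_pos hBij (hu' j₁)⟩

/-- The core Karlin comparison. -/
theorem karlin_core (hN : 0 < N) {M : Matrix (Fin N) (Fin N) ℝ}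
    (hM0 : ∀ i j, 0 ≤ M i j) (hMcol : ∀ j, ∑ i, M i j = 1) (hMirr : MatIrreducible M)
    {d : Fin N → ℝ} (hd : ∀ i, 0 < d i) {σ : ℝ} (hσ0 : 0 ≤ σ) (hσ1 : σ ≤ 1)
    {B₁ : Matrix (Fin N) (Fin N) ℝ}
    (hB₁ : B₁ = (1-σ) • (Matrix.diagonal d) + σ • (M * Matrix.diagonal d))
    (hB₁irr : MatIrreducible B₁) :
    specRad (M * Matrix.diagonal d) ≤ specRad B₁ := by
  classical
  haveI : Nonempty (Fin N) := ⟨⟨0, hN⟩⟩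
  set B₂ := M * Matrix.diagonal d with hB₂def
  have hB₂entry : ∀ i j, B₂ i j = M i j * d j := by
    intro i j
    rw [hB₂def, Matrix.mul_diagonal]
  have hB₂0 : ∀ i j, 0 ≤ B₂ i j := fun i j => by
    rw [hB₂entry]; exact mul_nonneg (hM0 i j) (hd j).le
  have hB₂col : ∀ j, ∑ i, B₂ i j = d j := by
    intro j
    simp only [hB₂entry]
    rw [← Finset.sum_mul, hMcol, one_mul]
  have hB₂irr : MatIrreducible B₂ := by
    apply matIrreducible_mono hMirr
    intro i j h
    rw [hB₂entry]
    exact mul_ne_zero h (ne_of_gt (hd i))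
  have hdiag_apply : ∀ i j, (Matrix.diagonal d) i j = if i = j then d i else 0 := by
    intro i j; rw [Matrix.diagonal_apply]
  have hB₁entry : ∀ i j, B₁ i j = (1-σ) * ((Matrix.diagonal d) i j) + σ * (M i j * d j) := by
    intro i j
    rw [hB₁]
    simp only [Matrix.add_apply, Matrix.smul_apply, smul_eq_mul]
    rw [hB₂entry]
  have hB₁0 : ∀ i j, 0 ≤ B₁ i j := by
    intro i j
    rw [hB₁entry, hdiag_apply]
    have h1 : (0:ℝ) ≤ 1 - σ := by linarith
    split
    · exact add_nonneg (mul_nonneg h1 (hd i).le)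
        (mul_nonneg hσ0 (mul_nonneg (hM0 i j) (hd j).le))
    · rw [mul_zero, zero_add]
      exact mul_nonneg hσ0 (mul_nonneg (hM0 i j) (hd j).le)
  have hB₁col : ∀ j, ∑ i, B₁ i j = d j := by
    intro j
    simp only [hB₁entry]
    rw [Finset.sum_add_distrib, ← Finset.mul_sum, ← Finset.mul_sum]
    have hdcol : ∑ i, (Matrix.diagonal d) i j = d j := by
      rw [Finset.sum_eq_single j]
      · rw [hdiag_apply]; simp
      · intro b _ hb; rw [hdiag_apply]; simp [hb]
      · intro hb; exact absurd (Finset.mem_univ j) hb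
    rw [hdcol, ← Finset.sum_mul, hMcol, one_mul]
    ring
  -- Perron data
  obtain ⟨r₂, u₂, hr₂0, hu₂, hB₂u₂⟩ := perron_exists hN hB₂0 hB₂irr
  obtain ⟨r₂', w₂, hr₂'0, hw₂, hB₂w₂⟩ :=
    perron_exists (A := B₂ᵀ) hN (fun i j => hB₂0 j i) (irred_transpose hB₂irr)
  obtain ⟨r₁, u₁, hr₁0, hu₁, hB₁u₁⟩ := perron_exists hN hB₁0 hB₁irr
  obtain ⟨rM, v, hrM0, hv, hMv⟩ := perron_exists hN hM0 hMirr
  have hr₂pos : 0 < r₂ := root_pos_of_colsum hN hB₂col hd hu₂ hB₂u₂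
  have hr₁pos : 0 < r₁ := root_pos_of_colsum hN hB₁col hd hu₁ hB₁u₁
  -- rM = 1
  have hrM1 : rM = 1 := by
    have h1 : ∑ i, M.mulVec v i = ∑ j, v j := by
      simp only [mulVec_apply']
      rw [Finset.sum_comm]
      apply Finset.sum_congr rfl
      intro j _
      rw [← Finset.sum_mul, hMcol, one_mul]
    have h2 : ∑ i, M.mulVec v i = rM * ∑ i, v i := by
      rw [hMv]
      simp only [Pi.smul_apply, smul_eq_mul, ← Finset.mul_sum]
    have h4 : 0 < ∑ i, v i := Finset.sum_pos (fun i _ => hv i) Finset.univ_nonempty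
    nlinarith [h1, h2, h4]
  rw [hrM1] at hMv
  -- r₂' = r₂
  have hw₂ne : w₂ ≠ 0 := by
    intro h0
    have := hw₂ ⟨0, hN⟩
    rw [h0] at this
    simp at this
  have hu₂ne : u₂ ≠ 0 := by
    intro h0
    have := hu₂ ⟨0, hN⟩
    rw [h0] at this
    simp at this
  have hBu₂le : ∀ i, B₂.mulVec u₂ i ≤ r₂ * u₂ i := by
    intro i
    rw [hB₂u₂]
    simp
  have hBw₂le : ∀ i, B₂ᵀ.mulVec w₂ i ≤ r₂' * w₂ i := by
    intro i
    rw [hB₂w₂]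
    simp
  have hr₂'eq : r₂' = r₂ := by
    have e1 : IsEigenvalue B₂ (r₂' : ℂ) :=
      isEigenvalue_transpose_iff.mp (isEigenvalue_of_real hw₂ne hB₂w₂)
    have e2 : IsEigenvalue B₂ᵀ (r₂ : ℂ) :=
      isEigenvalue_transpose_iff.mpr (isEigenvalue_of_real hu₂ne hB₂u₂)
    have b1 : ‖(r₂' : ℂ)‖ ≤ r₂ := abs_eigenvalue_le hB₂0 hu₂ hBu₂le e1
    have b2 : ‖(r₂ : ℂ)‖ ≤ r₂' :=
      abs_eigenvalue_le (fun i j => hB₂0 j i) hw₂ hBw₂le e2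
    rw [Complex.norm_real, Real.norm_eq_abs, abs_of_nonneg hr₂'0] at b1
    rw [Complex.norm_real, Real.norm_eq_abs, abs_of_nonneg hr₂0] at b2
    linarith
  rw [hr₂'eq] at hB₂w₂
  -- specRad identification
  have hspec₂ : specRad B₂ = r₂ := specRad_eq_of_eigenpair hN hB₂0 hu₂ hr₂0 hB₂u₂
  have hspec₁ : specRad B₁ = r₁ := specRad_eq_of_eigenpair hN hB₁0 hu₁ hr₁0 hB₁u₁
  rw [hspec₂, hspec₁]
  -- weights
  set W := ∑ i, w₂ i * u₂ i with hWdef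
  have hW : 0 < W :=
    Finset.sum_pos (fun i _ => mul_pos (hw₂ i) (hu₂ i)) Finset.univ_nonempty
  -- Key B : W log r₂ ≤ ∑ w u log d
  have hx : ∀ i, 0 < v i / d i := fun i => div_pos (hv i) (hd i)
  have hBx : B₂.mulVec (fun i => v i / d i) = v := by
    rw [hB₂def, ← Matrix.mulVec_mulVec]
    have : (Matrix.diagonal d).mulVec (fun i => v i / d i) = v := by
      funext i
      rw [Matrix.mulVec_diagonal, mul_comm, div_mul_cancel₀ _ (ne_of_gt (hd i))]
    rw [this, hMv, one_smul]
  have hKeyB : W * Real.log r₂ ≤ ∑ i, w₂ i * u₂ i * Real.log (d i) := by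
    have h := collatz_log_lower (x := fun i => v i / d i) hB₂0 hu₂ hw₂ hx hr₂pos hB₂u₂ hB₂w₂
    calc W * Real.log r₂ ≤ ∑ i, w₂ i * u₂ i * Real.log (B₂.mulVec (fun i => v i / d i) i / (v i / d i)) := h
      _ = ∑ i, w₂ i * u₂ i * Real.log (d i) := by
          apply Finset.sum_congr rfl
          intro i _
          rw [hBx]
          congr 2
          rw [div_div_eq_mul_div, mul_comm, mul_div_assoc, div_self (ne_of_gt (hv i)), mul_one]
  -- Key A : W log r₂ ≤ ∑ w u log q
  have hKeyA : W * Real.log r₂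
      ≤ ∑ i, w₂ i * u₂ i * Real.log (B₂.mulVec u₁ i / u₁ i) :=
    collatz_log_lower hB₂0 hu₂ hw₂ hu₁ hr₂pos hB₂u₂ hB₂w₂
  -- chain
  have hq : ∀ i, 0 < B₂.mulVec u₁ i := mulVec_pos_of_eigen hB₂0 hu₂ hr₂pos hB₂u₂ hu₁
  have hratio : ∀ i, B₁.mulVec u₁ i / u₁ i = (1-σ) * d i + σ * (B₂.mulVec u₁ i / u₁ i) := by
    intro i
    have hexp : B₁.mulVec u₁ i = (1-σ) * (d i * u₁ i) + σ * (B₂.mulVec u₁ i) := by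
      rw [hB₁, Matrix.add_mulVec, Matrix.smul_mulVec, Matrix.smul_mulVec]
      simp only [Pi.add_apply, Pi.smul_apply, smul_eq_mul, ← hB₂def]
      rw [Matrix.mulVec_diagonal]
    rw [hexp]
    field_simp [ne_of_gt (hu₁ i)]
  have hconc : ∀ i, (1-σ) * Real.log (d i) + σ * Real.log (B₂.mulVec u₁ i / u₁ i)
      ≤ Real.log (B₁.mulVec u₁ i / u₁ i) := by
    intro i
    rw [hratio i]
    have hq' : 0 < B₂.mulVec u₁ i / u₁ i := div_pos (hq i) (hu₁ i)
    have := (strictConcaveOn_log_Ioi.concaveOn).2 (Set.mem_Ioi.mpr (hd i))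
      (Set.mem_Ioi.mpr hq') (by linarith : (0:ℝ) ≤ 1 - σ) hσ0 (by ring)
    simpa [smul_eq_mul] using this
  have hlog₁ : ∀ i, Real.log (B₁.mulVec u₁ i / u₁ i) = Real.log r₁ := by
    intro i
    rw [hB₁u₁]
    simp only [Pi.smul_apply, smul_eq_mul]
    rw [mul_div_assoc, div_self (ne_of_gt (hu₁ i)), mul_one]
  have hfinal : W * Real.log r₂ ≤ W * Real.log r₁ := by
    have hsum : ∑ i, w₂ i * u₂ i * Real.log (B₁.mulVec u₁ i / u₁ i) = W * Real.log r₁ := by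
      rw [Finset.sum_congr rfl (fun i _ => by rw [hlog₁ i])]
      rw [← Finset.sum_mul]
    have hchain : ∑ i, w₂ i * u₂ i * ((1-σ) * Real.log (d i)
        + σ * Real.log (B₂.mulVec u₁ i / u₁ i))
        ≤ ∑ i, w₂ i * u₂ i * Real.log (B₁.mulVec u₁ i / u₁ i) := by
      apply Finset.sum_le_sum
      intro i _
      exact mul_le_mul_of_nonneg_left (hconc i) (mul_pos (hw₂ i) (hu₂ i)).le
    have hsplit : ∑ i, w₂ i * u₂ i * ((1-σ) * Real.log (d i)
        + σ * Real.log (B₂.mulVec u₁ i / u₁ i))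
        = (1-σ) * (∑ i, w₂ i * u₂ i * Real.log (d i))
          + σ * (∑ i, w₂ i * u₂ i * Real.log (B₂.mulVec u₁ i / u₁ i)) := by
      rw [Finset.mul_sum, Finset.mul_sum, ← Finset.sum_add_distrib]
      apply Finset.sum_congr rfl
      intro i _
      ring
    have hlb : W * Real.log r₂ ≤ ∑ i, w₂ i * u₂ i * ((1-σ) * Real.log (d i)
        + σ * Real.log (B₂.mulVec u₁ i / u₁ i)) := by
      rw [hsplit]
      have e1 := mul_le_mul_of_nonneg_left hKeyB (by linarith : (0:ℝ) ≤ 1 - σ)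
      have e2 := mul_le_mul_of_nonneg_left hKeyA hσ0
      nlinarith [e1, e2]
    calc W * Real.log r₂ ≤ _ := hlb
      _ ≤ ∑ i, w₂ i * u₂ i * Real.log (B₁.mulVec u₁ i / u₁ i) := hchain
      _ = W * Real.log r₁ := hsum
  have hloglog : Real.log r₂ ≤ Real.log r₁ := le_of_mul_le_mul_left hfinal hW
  exact (Real.log_le_log_iff hr₂pos hr₁pos).mp hloglog

end Core


lemma specRad_eq_of_mem_bound {A : Matrix (Fin N) (Fin N) ℝ} {r : ℝ}
    (hmem : IsEigenvalue A (r : ℂ)) (hr : 0 ≤ r)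
    (hb : ∀ μ : ℂ, IsEigenvalue A μ → ‖μ‖ ≤ r) : specRad A = r := by
  have hmem' : r ∈ {s : ℝ | ∃ μ : ℂ, IsEigenvalue A μ ∧ s = ‖μ‖} :=
    ⟨(r : ℂ), hmem, by simp [abs_of_nonneg hr]⟩
  have hub : ∀ s ∈ {s : ℝ | ∃ μ : ℂ, IsEigenvalue A μ ∧ s = ‖μ‖}, s ≤ r := by
    rintro s ⟨μ, hμ, rfl⟩
    exact hb μ hμ
  exact le_antisymm (csSup_le ⟨r, hmem'⟩ hub) (le_csSup ⟨r, hub⟩ hmem')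

lemma specRad_diagonal_le {d : Fin N → ℝ} (hN : 0 < N) (hd : ∀ i, 0 < d i)
    {istar : Fin N} (hmax : ∀ i, d i ≤ d istar) :
    specRad (Matrix.diagonal d) = d istar := by
  haveI : Nonempty (Fin N) := ⟨⟨0, hN⟩⟩
  apply specRad_eq_of_mem_bound
  · apply isEigenvalue_of_real (u := Pi.single istar 1)
    · intro h0
      have := congrFun h0 istar
      simp at this
    · funext j
      rw [Matrix.mulVec_diagonal]
      rcases eq_or_ne j istar with rfl | hj
      · simp
      · simp [Pi.single_eq_of_ne hj]
  · exact (hd istar).le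
  · intro μ hμ
    apply abs_eigenvalue_le (x := fun _ => (1:ℝ)) (c := d istar) ?_ (fun i => one_pos) ?_ hμ
    · intro i j
      rw [Matrix.diagonal_apply]
      split
      · next h => exact (h ▸ (hd i).le)
      · exact le_refl 0
    · intro i
      rw [mulVec_apply']
      rw [Finset.sum_eq_single i]
      · simp [Matrix.diagonal_apply_eq]
        exact hmax i
      · intro b _ hb
        simp [Matrix.diagonal_apply_ne' _ hb]
      · intro hb; exact absurd (Finset.mem_univ i) hb

end Karlin

open Karlin in
theorem karlin_monotonicity' (N : ℕ) (S : Matrix (Fin N) (Fin N) ℝ)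
    (hS : ∀ i j, 0 ≤ S i j) (hcol : ∀ j, ∑ i, S i j = 1)
    (hirr : MatIrreducible S)
    (d : Fin N → ℝ) (hd : ∀ i, 0 < d i) :
    ∀ τ₁ ∈ Set.Icc (0:ℝ) 1, ∀ τ₂ ∈ Set.Icc (0:ℝ) 1, τ₁ ≤ τ₂ →
      specRad (((1-τ₂) • (1 : Matrix (Fin N) (Fin N) ℝ) + τ₂ • S) * Matrix.diagonal d)
        ≤ specRad (((1-τ₁) • (1 : Matrix (Fin N) (Fin N) ℝ) + τ₁ • S) * Matrix.diagonal d) := by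
  classical
  rintro τ₁ ⟨hτ₁0, hτ₁1⟩ τ₂ ⟨hτ₂0, hτ₂1⟩ h12
  rcases Nat.eq_zero_or_pos N with rfl | hN
  · have : (((1-τ₂) • (1 : Matrix (Fin 0) (Fin 0) ℝ) + τ₂ • S) * Matrix.diagonal d)
        = (((1-τ₁) • (1 : Matrix (Fin 0) (Fin 0) ℝ) + τ₁ • S) * Matrix.diagonal d) := by
      ext i j
      exact i.elim0
    rw [this]
  -- entry formula
  have happly : ∀ (τ : ℝ) (i j : Fin N),
      ((((1-τ) • (1 : Matrix (Fin N) (Fin N) ℝ) + τ • S) * Matrix.diagonal d)) i j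
      = ((1-τ) * (if i = j then 1 else 0) + τ * S i j) * d j := by
    intro τ i j
    rw [Matrix.mul_diagonal]
    simp [Matrix.add_apply, Matrix.smul_apply, smul_eq_mul, Matrix.one_apply]
  rcases eq_or_lt_of_le hτ₂0 with rfl | hτ₂pos
  · -- τ₂ = 0 forces τ₁ = 0
    have : τ₁ = 0 := le_antisymm h12 hτ₁0
    rw [this]
  -- the τ₂-matrix data
  set M : Matrix (Fin N) (Fin N) ℝ := (1-τ₂) • (1 : Matrix (Fin N) (Fin N) ℝ) + τ₂ • S with hMdef
  have hMapply : ∀ i j, M i j = (1-τ₂) * (if i = j then 1 else 0) + τ₂ * S i j := by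
    intro i j
    rw [hMdef]
    simp [Matrix.add_apply, Matrix.smul_apply, smul_eq_mul, Matrix.one_apply]
  have hM0 : ∀ i j, 0 ≤ M i j := by
    intro i j
    rw [hMapply]
    have h1 : (0:ℝ) ≤ 1 - τ₂ := by linarith
    split
    · nlinarith [hS i j]
    · nlinarith [hS i j]
  have hMcol : ∀ j, ∑ i, M i j = 1 := by
    intro j
    simp only [hMapply]
    rw [Finset.sum_add_distrib, ← Finset.mul_sum, ← Finset.mul_sum, hcol]
    rw [Finset.sum_ite_eq' Finset.univ j (fun _ => (1:ℝ))]
    simp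
  have hMirr : MatIrreducible M := by
    apply matIrreducible_mono hirr
    intro i j h
    rw [hMapply]
    have hSpos : 0 < τ₂ * S j i := lt_of_le_of_ne (mul_nonneg (le_of_lt hτ₂pos) (hS j i))
      (fun hc => h (by
        rcases mul_eq_zero.mp hc.symm with h' | h'
        · exact absurd h' (ne_of_gt hτ₂pos)
        · exact h'))
    have h1 : (0:ℝ) ≤ 1 - τ₂ := by linarith
    split
    · nlinarith [hSpos]
    · rw [mul_zero, zero_add]
      exact ne_of_gt hSpos
  -- B₂ basics
  set B₂ := M * Matrix.diagonal d with hB₂def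
  have hB₂entry : ∀ i j, B₂ i j = M i j * d j := by
    intro i j
    rw [hB₂def, Matrix.mul_diagonal]
  have hB₂0 : ∀ i j, 0 ≤ B₂ i j := fun i j => by
    rw [hB₂entry]; exact mul_nonneg (hM0 i j) (hd j).le
  have hB₂col : ∀ j, ∑ i, B₂ i j = d j := by
    intro j
    simp only [hB₂entry]
    rw [← Finset.sum_mul, hMcol, one_mul]
  rcases eq_or_lt_of_le hτ₁0 with rfl | hτ₁pos
  · -- τ₁ = 0 : compare with the diagonal matrix
    have hDeq : (((1-(0:ℝ)) • (1 : Matrix (Fin N) (Fin N) ℝ) + (0:ℝ) • S) * Matrix.diagonal d)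
        = Matrix.diagonal d := by
      ext i j
      rw [happly, Matrix.diagonal_apply]
      split
      · next h => simp [h]
      · simp
    rw [hDeq]
    obtain ⟨istar, -, hmax⟩ :=
      Finset.exists_max_image Finset.univ d ⟨⟨0, hN⟩, Finset.mem_univ _⟩
    have hmax' : ∀ i, d i ≤ d istar := fun i => hmax i (Finset.mem_univ i)
    rw [specRad_diagonal_le hN hd hmax']
    apply specRad_le (hd istar).le
    intro μ hμ
    have hμ' : IsEigenvalue B₂ᵀ μ := isEigenvalue_transpose_iff.mpr hμ
    apply abs_eigenvalue_le (A := B₂ᵀ) (x := fun _ => (1:ℝ)) (fun i j => hB₂0 j i)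
      (fun i => one_pos) ?_ hμ'
    intro j
    have : B₂ᵀ.mulVec (fun _ => (1:ℝ)) j = ∑ i, B₂ i j := by
      rw [mulVec_apply']
      simp [Matrix.transpose_apply]
    rw [this, hB₂col, mul_one]
    exact hmax' j
  · -- main case 0 < τ₁ ≤ τ₂
    set σ := τ₁ / τ₂ with hσdef
    have hσ0 : 0 ≤ σ := div_nonneg hτ₁0 hτ₂pos.le
    have hσ1 : σ ≤ 1 := (div_le_one hτ₂pos).mpr h12
    have hτ₁eq : τ₁ = σ * τ₂ := (div_mul_cancel₀ _ (ne_of_gt hτ₂pos)).symm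
    apply karlin_core hN hM0 hMcol hMirr hd hσ0 hσ1
    · -- the matrix identity
      ext i j
      rw [happly, Matrix.add_apply, Matrix.smul_apply, Matrix.smul_apply,
        Matrix.diagonal_apply, Matrix.mul_diagonal, hMapply]
      rw [hτ₁eq]
      simp only [smul_eq_mul]
      split
      · next h => subst h; ring
      · ring
    · -- irreducibility of the τ₁-matrix
      apply matIrreducible_mono hirr
      intro i j h
      rw [happly]
      apply mul_ne_zero _ (ne_of_gt (hd i))
      have hSpos : 0 < τ₁ * S j i := lt_of_le_of_ne (mul_nonneg hτ₁pos.le (hS j i))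
        (fun hc => h (by
          rcases mul_eq_zero.mp hc.symm with h' | h'
          · exact absurd h' (ne_of_gt hτ₁pos)
          · exact h'))
      have h1 : (0:ℝ) ≤ 1 - τ₁ := by linarith
      split
      · nlinarith [hSpos]
      · rw [mul_zero, zero_add]
        exact ne_of_gt hSpos

/-- Karlin's theorem: for an irreducible column-stochastic
nonnegative matrix `S` and a positive diagonal matrix `D`, the map
`τ ↦ λ_PF(((1−τ)I + τS)D)` is nonincreasing on `[0,1]`. -/
theorem karlin_monotonicity (N : ℕ) (S : Matrix (Fin N) (Fin N) ℝ)
    (hS : ∀ i j, 0 ≤ S i j) (hcol : ∀ j, ∑ i, S i j = 1)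
    (hirr : MatIrreducible S)
    (d : Fin N → ℝ) (hd : ∀ i, 0 < d i) :
    ∀ τ₁ ∈ Set.Icc (0:ℝ) 1, ∀ τ₂ ∈ Set.Icc (0:ℝ) 1, τ₁ ≤ τ₂ →
      specRad (((1-τ₂) • (1 : Matrix (Fin N) (Fin N) ℝ) + τ₂ • S) * Matrix.diagonal d)
        ≤ specRad (((1-τ₁) • (1 : Matrix (Fin N) (Fin N) ℝ) + τ₁ • S) * Matrix.diagonal d) :=
  karlin_monotonicity' N S hS hcol hirr d hd
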